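/- The category of polynomial functors is closed under all small limits: the pointwise limit of any small diagram of polynomial functors (as functors Set → Set) is again a polynomial functor. -/

import Mathlib

universe u

open CategoryTheory CategoryTheory.Limits

/-- The endofunctor of `Type u` underlying a polynomial functor. -/
def PFunctor.toFunctor (P : PFunctor.{u}) : Type u ⥤ Type u where
  obj := P.Obj
  map f := TypeCat.ofHom (P.map f)
  map_id := by intro X; apply ConcreteCategory.hom_ext; intro x; cases x; rfl
  map_comp := by intro X Y Z f g; apply ConcreteCategory.hom_ext; intro x; cases x; rfl

namespace PolyLimAux

theorem sigma_snd_eq {A : Type u} {B : A → Type u} {X : Type u}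
    {x y : Σ a, B a → X} (h : x = y) (b : B y.1) :
    y.2 b = x.2 (cast (congrArg B (congrArg Sigma.fst h).symm) b) := by
  subst h; rfl

theorem sigma_ext {A : Type u} {B : A → Type u} {X : Type u}
    {c₁ c₂ : A} {g₁ : B c₁ → X} {g₂ : B c₂ → X} (h : c₁ = c₂)
    (h2 : ∀ b : B c₂, g₁ (cast (congrArg B h.symm) b) = g₂ b) :
    (⟨c₁, g₁⟩ : Σ a, B a → X) = ⟨c₂, g₂⟩ := by
  subst h
  exact congrArg (Sigma.mk c₁) (funext fun b => h2 b)

theorem map_eq (P : PFunctor.{u}) {X Y : Type u} (f : X → Y) (y : P.Obj X) :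
    P.toFunctor.map (TypeCat.ofHom f) y = ⟨y.1, f ∘ y.2⟩ := by
  obtain ⟨a, g⟩ := y; rfl

variable {J : Type u} [SmallCategory J] (D : J ⥤ Type u ⥤ Type u)
  (P : J → PFunctor.{u}) (e : ∀ j, D.obj j ≅ (P j).toFunctor)

/-- The transition natural transformation between the polynomial models. -/
def t {j k : J} (u : j ⟶ k) : (P j).toFunctor ⟶ (P k).toFunctor :=
  (e j).inv ≫ D.map u ≫ (e k).hom

/-- The action of a transition map on shapes. -/
def al {j k : J} (u : j ⟶ k) (a : (P j).A) : (P k).A :=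
  ((t D P e u).app PUnit.{u + 1} ⟨a, fun _ => PUnit.unit⟩).1

theorem fst_natural {j k : J} (u : j ⟶ k) (X : Type u) (x : (P j).Obj X) :
    ((t D P e u).app X x).1 = al D P e u x.1 := by
  obtain ⟨a, f⟩ := x
  have h : (t D P e u).app PUnit.{u + 1}
        ((P j).toFunctor.map (TypeCat.ofHom (fun _ => PUnit.unit : X → PUnit.{u + 1})) ⟨a, f⟩)
      = (P k).toFunctor.map (TypeCat.ofHom (fun _ => PUnit.unit : X → PUnit.{u + 1}))
        ((t D P e u).app X ⟨a, f⟩) :=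
    FunctorToTypes.naturality (t D P e u) _ _
  have h1 : (P j).toFunctor.map (TypeCat.ofHom (fun _ => PUnit.unit : X → PUnit.{u + 1})) ⟨a, f⟩
      = ⟨a, fun _ => PUnit.unit⟩ := rfl
  calc ((t D P e u).app X ⟨a, f⟩).1
      = ((P k).toFunctor.map (TypeCat.ofHom (fun _ => PUnit.unit : X → PUnit.{u + 1}))
          ((t D P e u).app X ⟨a, f⟩)).1 := (congrArg Sigma.fst (map_eq _ _ _)).symm
    _ = ((t D P e u).app PUnit.{u + 1} ⟨a, fun _ => PUnit.unit⟩).1 := by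
          rw [← h, h1]
    _ = al D P e u a := rfl

/-- The generic element. -/
def gen {j k : J} (u : j ⟶ k) (a : (P j).A) : (P k).Obj ((P j).B a) :=
  (t D P e u).app ((P j).B a) ⟨a, id⟩

theorem gen_fst {j k : J} (u : j ⟶ k) (a : (P j).A) :
    (gen D P e u a).1 = al D P e u a :=
  fst_natural D P e u _ ⟨a, id⟩

/-- The action of a transition map on positions. -/
def be {j k : J} (u : j ⟶ k) (a : (P j).A) (b : (P k).B (al D P e u a)) :
    (P j).B a :=
  (gen D P e u a).2 (cast (congrArg (P k).B (gen_fst D P e u a).symm) b)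

theorem t_app {j k : J} (u : j ⟶ k) (X : Type u) (a : (P j).A)
    (f : (P j).B a → X) :
    (t D P e u).app X ⟨a, f⟩ = ⟨al D P e u a, f ∘ be D P e u a⟩ := by
  have h : (t D P e u).app X ((P j).toFunctor.map (TypeCat.ofHom f) ⟨a, id⟩)
      = (P k).toFunctor.map (TypeCat.ofHom f) ((t D P e u).app ((P j).B a) ⟨a, id⟩) :=
    FunctorToTypes.naturality (t D P e u) _ _
  have h1 : (P j).toFunctor.map (TypeCat.ofHom f) ⟨a, id⟩ = (⟨a, f⟩ : (P j).Obj X) := rfl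
  rw [h1] at h
  rw [h]; refine (map_eq _ _ _).trans ?_
  exact sigma_ext (gen_fst D P e u a) (fun b => rfl)

/-- Shapes of the limit polynomial functor: compatible families of shapes. -/
def LimA : Type u :=
  {a : ∀ j, (P j).A // ∀ (j k : J) (u : j ⟶ k), al D P e u (a j) = a k}

/-- Transition on positions, recast along a compatible family. -/
def be' {j k : J} (u : j ⟶ k) (a : LimA D P e) (b : (P k).B (a.1 k)) :
    (P j).B (a.1 j) :=
  be D P e u (a.1 j) (cast (congrArg (P k).B (a.2 j k u).symm) b)

/-- Positions of the limit polynomial functor: a colimit of the positions. -/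
def LimB (a : LimA D P e) : Type u :=
  Quot (fun x y : Σ j, (P j).B (a.1 j) => ∃ u : x.1 ⟶ y.1, x.2 = be' D P e u a y.2)

/-- The limit polynomial functor. -/
def Q : PFunctor.{u} := ⟨LimA D P e, LimB D P e⟩

/-- Projections of the limit. -/
def piP (j : J) : (Q D P e).toFunctor ⟶ (P j).toFunctor where
  app X := TypeCat.ofHom fun x => ⟨x.1.1 j, fun b => x.2 (Quot.mk _ ⟨j, b⟩)⟩
  naturality X Y g := by apply ConcreteCategory.hom_ext; intro x; obtain ⟨a, f⟩ := x; rfl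

theorem piP_t {j k : J} (u : j ⟶ k) :
    piP D P e j ≫ t D P e u = piP D P e k := by
  apply NatTrans.ext
  funext X
  apply ConcreteCategory.hom_ext
  intro x
  obtain ⟨a, f⟩ := x
  show (t D P e u).app X ⟨a.1 j, fun b => f (Quot.mk _ ⟨j, b⟩)⟩
      = ⟨a.1 k, fun b => f (Quot.mk _ ⟨k, b⟩)⟩
  rw [t_app]
  exact sigma_ext (a.2 j k u) (fun b => congrArg f (Quot.sound ⟨u, rfl⟩))

/-- The limit cone on the limit polynomial functor. -/
def limCone : Cone D where
  pt := (Q D P e).toFunctor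
  π :=
    { app := fun j => piP D P e j ≫ (e j).inv
      naturality := fun j k u => by
        dsimp
        rw [Category.id_comp, ← piP_t D P e u]
        simp [t] }

/-- A compatible family of elements gives an element of the limit. -/
def mkElem (X : Type u) (s' : ∀ j, (P j).Obj X)
    (hs : ∀ (j k : J) (u : j ⟶ k), (t D P e u).app X (s' j) = s' k) :
    (Q D P e).Obj X :=
  ⟨⟨fun j => (s' j).1, fun j k u => by
      have h := congrArg Sigma.fst (hs j k u)
      rwa [fst_natural] at h⟩,
   Quot.lift (fun x => (s' x.1).2 x.2) (by
      rintro ⟨j, b⟩ ⟨k, b'⟩ ⟨u, hb⟩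
      dsimp only at u hb ⊢
      subst hb
      have h : (⟨al D P e u (s' j).1, (s' j).2 ∘ be D P e u (s' j).1⟩ :
          (P k).Obj X) = s' k := by
        rw [← t_app]; exact hs j k u
      exact (sigma_snd_eq h b').symm)⟩

theorem piP_jointly_injective (X : Type u) (p q : (Q D P e).Obj X)
    (h : ∀ j, (piP D P e j).app X p = (piP D P e j).app X q) : p = q := by
  obtain ⟨a, f⟩ := p
  obtain ⟨a', f'⟩ := q
  have ha : a = a' := Subtype.ext (funext fun j => congrArg Sigma.fst (h j))
  subst ha
  have hf : f = f' := by
    funext b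
    induction b using Quot.ind with
    | _ x =>
      obtain ⟨j, b₀⟩ := x
      have hj : (⟨a.1 j, fun b => f (Quot.mk _ ⟨j, b⟩)⟩ : (P j).Obj X)
          = ⟨a.1 j, fun b => f' (Quot.mk _ ⟨j, b⟩)⟩ := h j
      have h2 := congrFun (eq_of_heq (Sigma.mk.inj_iff.mp hj).2) b₀
      exact h2
  rw [hf]

/-- The limit cone is a (pointwise) limit. -/
def limIsLimit : IsLimit (limCone D P e) := by
  apply evaluationJointlyReflectsLimits
  intro X
  refine
    { lift := fun s => TypeCat.ofHom fun x =>
        mkElem D P e X (fun j => (e j).hom.app X (s.π.app j x)) (fun j k u => ?_)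
      fac := fun s j => ?_
      uniq := fun s m hm => ?_ }
  · -- compatibility of the family
    have h1 : (e j).inv.app X ((e j).hom.app X (s.π.app j x)) = s.π.app j x :=
      (e j).hom_inv_id_app_apply X (s.π.app j x)
    have hπ := ConcreteCategory.congr_hom (s.w u) x
    show (e k).hom.app X
        ((D.map u).app X ((e j).inv.app X ((e j).hom.app X (s.π.app j x))))
      = (e k).hom.app X (s.π.app k x)
    rw [h1]
    exact congrArg _ hπ
  · apply ConcreteCategory.hom_ext
    intro x
    show (e j).inv.app X ((piP D P e j).app X _) = s.π.app j x
    exact (e j).hom_inv_id_app_apply X (s.π.app j x)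
  · apply ConcreteCategory.hom_ext
    intro x
    apply piP_jointly_injective
    intro j
    have hmx : (e j).inv.app X ((piP D P e j).app X (m x)) = s.π.app j x :=
      ConcreteCategory.congr_hom (hm j) x
    have : (piP D P e j).app X (m x) = (e j).hom.app X (s.π.app j x) := by
      rw [← hmx]
      exact ((e j).inv_hom_id_app_apply X _).symm
    rw [this]
    rfl

end PolyLimAux

/-- polynomial functors are closed under all small limits: the limit
(in the functor category, hence pointwise) of any small diagram of polynomial
functors is again a polynomial functor. -/
theorem pfunctor_closed_under_limits (J : Type u) [SmallCategory J]
    (D : J ⥤ Type u ⥤ Type u)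
    (hD : ∀ j : J, ∃ P : PFunctor.{u}, Nonempty (D.obj j ≅ P.toFunctor))
    (c : Cone D) (hc : IsLimit c) :
    ∃ P : PFunctor.{u}, Nonempty (c.pt ≅ P.toFunctor) := by
  choose P hP using hD
  have e : ∀ j, D.obj j ≅ (P j).toFunctor := fun j => (hP j).some
  exact ⟨PolyLimAux.Q D P e,
    ⟨hc.conePointUniqueUpToIso (PolyLimAux.limIsLimit D P e)⟩⟩
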